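/- The function v(t,x) = ln x + (r + (μ-r)²/(2σ²))(T-t) + (m/2)·ln(2π e m/σ²)·(T-t) solves the exploratory HJB equation v_t + r x v_x - ((μ-r)² v_x²)/(2σ² v_{xx}) + (m/2)·ln(-2π e m/(σ² x² v_{xx})) = 0 on [0,T) × (0,∞) with terminal condition v(T,x) = ln x. -/

import Mathlib

open Real Set

/-- The explicit function solves the exploratory HJB equation for logarithmic utility. -/
theorem log_utility_exploratory_HJB (r mu σ m T : ℝ)
    (hσ : 0 < σ) (hm : 0 < m) (hT : 0 < T)
    (v : ℝ → ℝ → ℝ)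
    (hv : ∀ t x, v t x = Real.log x + (r + (mu - r) ^ 2 / (2 * σ ^ 2)) * (T - t)
        + (m / 2) * Real.log (2 * π * Real.exp 1 * m / σ ^ 2) * (T - t)) :
    (∀ t ∈ Ico (0 : ℝ) T, ∀ x : ℝ, 0 < x →
      deriv (fun s => v s x) t + r * x * deriv (fun y => v t y) x
        - (mu - r) ^ 2 * (deriv (fun y => v t y) x) ^ 2 /
            (2 * σ ^ 2 * deriv (deriv (fun y => v t y)) x)
        + (m / 2) * Real.log (-(2 * π * Real.exp 1 * m) /
            (σ ^ 2 * x ^ 2 * deriv (deriv (fun y => v t y)) x)) = 0) ∧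
      (∀ x : ℝ, 0 < x → v T x = Real.log x) := by
  have hσ2 : σ ^ 2 ≠ 0 := pow_ne_zero 2 hσ.ne'
  set L : ℝ := Real.log (2 * π * Real.exp 1 * m / σ ^ 2) with hL
  set c : ℝ := (r + (mu - r) ^ 2 / (2 * σ ^ 2)) + (m / 2) * L with hc
  constructor
  · intro t ht x hx
    have hx0 : x ≠ 0 := hx.ne'
    -- spatial first derivative
    have hxfun : (fun y => v t y) = fun y => Real.log y + c * (T - t) := by
      funext y; rw [hv]; ring
    have hd1 : deriv (fun y => v t y) x = x⁻¹ := by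
      rw [hxfun, deriv_add_const, Real.deriv_log]
    -- spatial derivative as a function
    have hd1' : deriv (fun y => v t y) = fun y => y⁻¹ := by
      funext y
      rw [hxfun, deriv_add_const, Real.deriv_log]
    have hd2 : deriv (deriv (fun y => v t y)) x = -(x ^ 2)⁻¹ := by
      rw [hd1', deriv_inv]
    -- time derivative
    have hdt : deriv (fun s => v s x) t = -c := by
      have h1 : (fun s => v s x) = fun s => c * (T - s) + Real.log x := by
        funext s; rw [hv]; ring
      have h2 : HasDerivAt (fun s => c * (T - s) + Real.log x) (c * (0 - 1)) t := by
        exact (((hasDerivAt_const t T).sub (hasDerivAt_id t)).const_mul c).add_const _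
      rw [h1, h2.deriv]; ring
    rw [hdt, hd1, hd2]
    have harg : -(2 * π * Real.exp 1 * m) / (σ ^ 2 * x ^ 2 * -(x ^ 2)⁻¹)
        = 2 * π * Real.exp 1 * m / σ ^ 2 := by
      field_simp
    rw [harg, ← hL]
    rw [hc]
    field_simp
    ring
  · intro x hx
    rw [hv]; ring
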